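/- Cluster property of the scaling Ising form factors: fix n >= 2 and real numbers theta_2, ..., theta_n. Then there exist constants Cc > 0 and Theta in R such that for all theta_1 >= Theta: | product over j = 2 to n of tanh((theta_1 - theta_j)/2) - 1 | <= Cc * exp(-theta_1). Consequently, the form factor O_n(theta_1, ..., theta_n) = (product over 1 <= i < j <= n of tanh((theta_i - theta_j)/2)) satisfies O_n(theta_1, theta_2, ..., theta_n) = O_1 * O_{n-1}(theta_2, ..., theta_n) + O(e^{-theta_1}) as theta_1 -> infinity, where O_1 = 1 and O_{n-1}(theta_2,...,theta_n) = product over 2 <= i < j <= n of tanh((theta_i - theta_j)/2). -/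

import Mathlib

lemma my_abs_tanh_le_one (x : ℝ) : |Real.tanh x| ≤ 1 := by
  have hc := Real.cosh_pos x
  rw [Real.tanh_eq_sinh_div_cosh, abs_div, div_le_one (by positivity),
    abs_of_pos hc, abs_le]
  constructor
  · nlinarith [Real.cosh_add_sinh x, Real.exp_pos x]
  · nlinarith [Real.cosh_sub_sinh x, Real.exp_pos (-x)]

lemma my_tanh_sub_one (x : ℝ) : |Real.tanh x - 1| ≤ 2 * Real.exp (-(2*x)) := by
  have hc := Real.cosh_pos x
  have h1 : Real.tanh x - 1 = -(Real.exp (-x) / Real.cosh x) := by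
    rw [Real.tanh_eq_sinh_div_cosh]
    have := Real.cosh_sub_sinh x
    field_simp
    linarith
  rw [h1, abs_neg, abs_of_pos (by positivity)]
  have h2 : Real.exp x / 2 ≤ Real.cosh x := by
    nlinarith [Real.cosh_eq x, Real.exp_pos (-x)]
  calc Real.exp (-x) / Real.cosh x ≤ Real.exp (-x) / (Real.exp x / 2) := by
        apply div_le_div_of_nonneg_left (le_of_lt (Real.exp_pos _)) (by positivity) h2
    _ = 2 * Real.exp (-(2*x)) := by
        rw [show (-(2*x) : ℝ) = -x + -x by ring, Real.exp_add, Real.exp_neg x]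
        field_simp


lemma my_abs_prod_sub_one {ι : Type*} [DecidableEq ι] (s : Finset ι) (a : ι → ℝ)
    (h : ∀ i ∈ s, |a i| ≤ 1) : |(∏ i ∈ s, a i) - 1| ≤ ∑ i ∈ s, |a i - 1| := by
  induction s using Finset.induction_on with
  | empty => simp
  | @insert i s hi ih =>
    rw [Finset.prod_insert hi, Finset.sum_insert hi]
    have hai : |a i| ≤ 1 := h i (Finset.mem_insert_self i s)
    have hrest := ih fun j hj => h j (Finset.mem_insert_of_mem hj)
    have heq : a i * ∏ j ∈ s, a j - 1 = a i * ((∏ j ∈ s, a j) - 1) + (a i - 1) := by ring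
    rw [heq]
    calc |a i * ((∏ j ∈ s, a j) - 1) + (a i - 1)|
        ≤ |a i| * |(∏ j ∈ s, a j) - 1| + |a i - 1| := by
          rw [← abs_mul]; exact abs_add_le _ _
      _ ≤ 1 * (∑ j ∈ s, |a j - 1|) + |a i - 1| := by
          gcongr
      _ = |a i - 1| + ∑ j ∈ s, |a j - 1| := by ring


/-- The (normalized) `n`-particle Ising form factor
`Oₙ(φ₁,…,φₙ) = ∏_{1 ≤ i < j ≤ n} tanh((φᵢ - φⱼ)/2)`, with rapidities indexed by
`0, 1, …, n-1`. -/
noncomputable def isingFormFactor (n : ℕ) (φ : ℕ → ℝ) : ℝ :=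
  ∏ q ∈ (Finset.range n ×ˢ Finset.range n).filter (fun q => q.1 < q.2),
    Real.tanh ((φ q.1 - φ q.2) / 2)

/-- Cluster property of the scaling Ising form factors: for fixed
`θ₂, …, θₙ` there are `Cc > 0` and `Θ` such that for all `θ₁ ≥ Θ`
`|∏_{j=2}^{n} tanh((θ₁ - θⱼ)/2) - 1| ≤ Cc e^{-θ₁}`, and consequently
`|Oₙ(θ₁,θ₂,…,θₙ) - O₁ · O_{n-1}(θ₂,…,θₙ)| ≤ Cc e^{-θ₁}` with `O₁ = 1`,
i.e. `Oₙ(θ₁,…) = O₁ O_{n-1}(…) + O(e^{-θ₁})` as `θ₁ → ∞`. -/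
theorem ising_form_factor_cluster (n : ℕ) (hn : 2 ≤ n) (θ : ℕ → ℝ) :
    ∃ Cc > (0 : ℝ), ∃ Θ : ℝ, ∀ θ₁ ≥ Θ,
      |(∏ j ∈ Finset.Ico 1 n, Real.tanh ((θ₁ - θ j) / 2)) - 1| ≤ Cc * Real.exp (-θ₁) ∧
      |isingFormFactor n (Function.update θ 0 θ₁) -
          1 * ∏ q ∈ (Finset.range n ×ˢ Finset.range n).filter
                (fun q => 1 ≤ q.1 ∧ q.1 < q.2),
              Real.tanh ((θ q.1 - θ q.2) / 2)|
        ≤ Cc * Real.exp (-θ₁) := by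
  refine ⟨∑ j ∈ Finset.Ico 1 n, 2 * Real.exp (θ j), ?_, 0, fun θ₁ _ => ?_⟩
  · apply Finset.sum_pos (fun j _ => by positivity)
    exact ⟨1, Finset.mem_Ico.mpr ⟨le_refl 1, hn⟩⟩
  set A := ∏ j ∈ Finset.Ico 1 n, Real.tanh ((θ₁ - θ j) / 2) with hA
  set B := ∏ q ∈ (Finset.range n ×ˢ Finset.range n).filter
      (fun q => 1 ≤ q.1 ∧ q.1 < q.2), Real.tanh ((θ q.1 - θ q.2) / 2) with hB
  have hbound : |A - 1| ≤ (∑ j ∈ Finset.Ico 1 n, 2 * Real.exp (θ j)) * Real.exp (-θ₁) := by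
    calc |A - 1| ≤ ∑ j ∈ Finset.Ico 1 n, |Real.tanh ((θ₁ - θ j) / 2) - 1| :=
          my_abs_prod_sub_one _ _ (fun j _ => my_abs_tanh_le_one _)
      _ ≤ ∑ j ∈ Finset.Ico 1 n, 2 * Real.exp (θ j) * Real.exp (-θ₁) := by
          apply Finset.sum_le_sum
          intro j _
          have := my_tanh_sub_one ((θ₁ - θ j) / 2)
          calc |Real.tanh ((θ₁ - θ j) / 2) - 1| ≤ 2 * Real.exp (-(2 * ((θ₁ - θ j) / 2))) := this
            _ = 2 * Real.exp (θ j) * Real.exp (-θ₁) := by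
                rw [show -(2 * ((θ₁ - θ j) / 2)) = θ j + -θ₁ by ring, Real.exp_add]; ring
      _ = (∑ j ∈ Finset.Ico 1 n, 2 * Real.exp (θ j)) * Real.exp (-θ₁) := by
          rw [← Finset.sum_mul]
  refine ⟨hbound, ?_⟩
  -- split the form factor
  have hsplit : isingFormFactor n (Function.update θ 0 θ₁) = A * B := by
    rw [isingFormFactor,
      ← Finset.prod_filter_mul_prod_filter_not _ (fun q => q.1 = 0)]
    congr 1
    · rw [hA]
      apply Finset.prod_nbij' (fun q => q.2) (fun j => (0, j))
      · intro q hq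
        simp only [Finset.mem_filter, Finset.mem_product, Finset.mem_range] at hq
        exact Finset.mem_Ico.mpr ⟨by omega, hq.1.1.2⟩
      · intro j hj
        simp only [Finset.mem_Ico] at hj
        simp only [Finset.mem_filter, Finset.mem_product, Finset.mem_range]
        exact ⟨⟨⟨by omega, hj.2⟩, by omega⟩, trivial⟩
      · intro q hq
        simp only [Finset.mem_filter] at hq
        exact Prod.ext hq.2.symm rfl
      · intro j _; rfl
      · intro q hq
        simp only [Finset.mem_filter, Finset.mem_product, Finset.mem_range] at hq
        rw [hq.2, Function.update_self, Function.update_of_ne (by omega)]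
    · rw [hB]
      apply Finset.prod_congr
      · ext q
        simp only [Finset.mem_filter, Finset.mem_product, Finset.mem_range]
        omega
      · intro q hq
        simp only [Finset.mem_filter, Finset.mem_product, Finset.mem_range] at hq
        rw [Function.update_of_ne (by omega), Function.update_of_ne (by omega)]
  have hBle : |B| ≤ 1 := by
    rw [hB, Finset.abs_prod]
    apply Finset.prod_le_one (fun q _ => abs_nonneg _) (fun q _ => my_abs_tanh_le_one _)
  rw [hsplit, one_mul]
  calc |A * B - B| = |B| * |A - 1| := by rw [← abs_mul]; ring_nf
    _ ≤ 1 * |A - 1| := by gcongr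
    _ ≤ (∑ j ∈ Finset.Ico 1 n, 2 * Real.exp (θ j)) * Real.exp (-θ₁) := by
        rw [one_mul]; exact hbound
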